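/- For every Miller tree p and every infinite S ⊆ ω, exactly one of the following holds: (1) there is a Miller subtree q ≤ p with [q]_split ⊆ [S]^ω, or (2) there is H : Split(p) → ω such that for every f ∈ [p] the set {n : f↾n ∈ Split(p), f(n) ∈ S} is almost contained in {n : f↾n ∈ Split(p), f(n) < H(f↾n)}. -/

import Mathlib

/-- The restriction `f↾n` of `f : ω → ω`, as a finite sequence. -/
def res (f : ℕ → ℕ) (n : ℕ) : List ℕ := (List.range n).map f

/-- A tree on `ω`: a set of finite sequences closed under initial segments. -/
def IsTree (T : Set (List ℕ)) : Prop := ∀ s ∈ T, ∀ t, t <+: s → t ∈ T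

/-- The successor set `suc_T(s) = {n : s⌢n ∈ T}`. -/
def sucT (T : Set (List ℕ)) (s : List ℕ) : Set ℕ := {n | s ++ [n] ∈ T}

/-- `f ∈ [T]` is a branch of `T`. -/
def IsBranch (T : Set (List ℕ)) (f : ℕ → ℕ) : Prop := ∀ n, res f n ∈ T

/-- A Miller (superperfect) tree: a nonempty tree of strictly increasing sequences in
which every node extends to an infinitely-splitting node. -/
def IsMiller (p : Set (List ℕ)) : Prop :=
  p.Nonempty ∧ IsTree p ∧ (∀ s ∈ p, List.Chain' (· < ·) s) ∧
    ∀ s ∈ p, ∃ t ∈ p, s <+: t ∧ (sucT p t).Infinite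

/-- The (infinitely-)splitting nodes of `p`. -/
def SplitNodes (p : Set (List ℕ)) : Set (List ℕ) := {s | s ∈ p ∧ (sucT p s).Infinite}

/-- `Sp(p,f) = {f(n) : f↾n ∈ Split(p)}`. -/
def Sp (p : Set (List ℕ)) (f : ℕ → ℕ) : Set ℕ :=
  {m | ∃ n, res f n ∈ SplitNodes p ∧ f n = m}

/-- `[p]_split = {Sp(p,f) : f ∈ [p]}`. -/
def splitSets (p : Set (List ℕ)) : Set (Set ℕ) := {X | ∃ f, IsBranch p f ∧ X = Sp p f}

lemma res_length (f : ℕ → ℕ) (n : ℕ) : (res f n).length = n := by simp [res]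
lemma res_succ (f : ℕ → ℕ) (n : ℕ) : res f (n+1) = res f n ++ [f n] := by
  simp [res, List.range_succ]
lemma res_take (f : ℕ → ℕ) {m n : ℕ} (h : m ≤ n) : (res f n).take m = res f m := by
  simp [res, ← List.map_take, List.take_range, Nat.min_eq_left h]
lemma res_prefix (f : ℕ → ℕ) {m n : ℕ} (h : m ≤ n) : res f m <+: res f n := by
  rw [← res_take f h]; exact List.take_prefix _ _
lemma getD_append_lt {u w : List ℕ} {i : ℕ} (h : i < u.length) (d : ℕ) :
    (u ++ w).getD i d = u.getD i d := by
  simp [List.getD, List.getElem?_append, h]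
lemma getD_prefix {u v : List ℕ} (h : u <+: v) {i : ℕ} (hi : i < u.length) (d : ℕ) :
    v.getD i d = u.getD i d := by
  obtain ⟨w, rfl⟩ := h; exact getD_append_lt hi d
lemma getD_snoc (u : List ℕ) (a d : ℕ) : (u ++ [a]).getD u.length d = a := by
  simp [List.getD, List.getElem?_append_right (le_refl u.length)]
lemma getD_snoc_prefix {u A : List ℕ} {a : ℕ} (h : u ++ [a] <+: A) (d : ℕ) :
    A.getD u.length d = a := by
  rw [getD_prefix h (by simp) d]; exact getD_snoc u a d
lemma res_getD {f : ℕ → ℕ} {i n : ℕ} (h : i < n) (d : ℕ) : (res f n).getD i d = f i := by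
  have h1 : res f i ++ [f i] <+: res f n := by
    rw [← res_succ]; exact res_prefix f h
  have := getD_snoc_prefix (u := res f i) (a := f i) h1 d
  rwa [res_length] at this

/-- inductive "bad" nodes: every rich split node above `s` has at most finitely many
escaping `S`-successors. -/
inductive Bad (p : Set (List ℕ)) (S : Set ℕ) : List ℕ → Prop
  | intro (s : List ℕ) (E : List ℕ → Finset ℕ)
      (h : ∀ t, s <+: t → t ∈ p → (sucT p t).Infinite → (S ∩ sucT p t).Infinite →
        ∀ m, m ∈ S → m ∈ sucT p t → m ∉ E t → Bad p S (t ++ [m])) : Bad p S s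

lemma bad_main (p : Set (List ℕ)) (S : Set ℕ) :
    ∀ s, Bad p S s → ∃ H : List ℕ → ℕ, ∀ f, IsBranch p f → res f s.length = s →
      {n | res f n ∈ SplitNodes p ∧ f n ∈ S ∧ ¬ f n < H (res f n)}.Finite := by
  intro s hs
  induction hs with
  | intro s E h IH =>
    -- Skolemize IH
    have IH' : ∀ t m, ∃ H : List ℕ → ℕ,
        (s <+: t ∧ t ∈ p ∧ (sucT p t).Infinite ∧ (S ∩ sucT p t).Infinite ∧
          m ∈ S ∧ m ∈ sucT p t ∧ m ∉ E t) →
        ∀ f, IsBranch p f → res f (t ++ [m]).length = t ++ [m] →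
          {n | res f n ∈ SplitNodes p ∧ f n ∈ S ∧ ¬ f n < H (res f n)}.Finite := by
      intro t m
      by_cases hc : s <+: t ∧ t ∈ p ∧ (sucT p t).Infinite ∧ (S ∩ sucT p t).Infinite ∧
          m ∈ S ∧ m ∈ sucT p t ∧ m ∉ E t
      · obtain ⟨h1, h2, h3, h4, h5, h6, h7⟩ := hc
        obtain ⟨H, hH⟩ := IH t h1 h2 h3 h4 m h5 h6 h7
        exact ⟨H, fun _ => hH⟩
      · exact ⟨fun _ => 0, fun hc' => absurd hc' hc⟩
    choose G hG using IH'
    classical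
    refine ⟨fun u => max (max ((E u).sup id + 1)
        (if hf : (S ∩ sucT p u).Finite then hf.toFinset.sup id + 1 else 0))
        ((Finset.range u.length).sup (fun k => G (u.take k) (u.getD k 0) u)), ?_⟩
    intro f hf hres
    set H' : List ℕ → ℕ := fun u => max (max ((E u).sup id + 1)
        (if hf : (S ∩ sucT p u).Finite then hf.toFinset.sup id + 1 else 0))
        ((Finset.range u.length).sup (fun k => G (u.take k) (u.getD k 0) u)) with hH'
    by_cases hN : {n | res f n ∈ SplitNodes p ∧ f n ∈ S ∧ ¬ f n < H' (res f n)} ⊆ Set.Iic s.length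
    · exact (Set.finite_Iic _).subset hN
    · rw [Set.not_subset] at hN
      obtain ⟨n₀, hn₀, hgt⟩ := hN
      simp only [Set.mem_Iic, not_le] at hgt
      obtain ⟨hsplit, hmS, hbig⟩ := hn₀
      set t := res f n₀ with ht
      have hlen : t.length = n₀ := res_length f n₀
      have hpre : s <+: t := by
        rw [← hres]; exact res_prefix f (le_of_lt hgt)
      have hmem : t ∈ p := hsplit.1
      have hsuc : (sucT p t).Infinite := hsplit.2
      have hmsuc : f n₀ ∈ sucT p t := by
        have := hf (n₀ + 1); rwa [res_succ] at this
      -- richness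
      have hrich : (S ∩ sucT p t).Infinite := by
        by_contra hfin
        rw [Set.not_infinite] at hfin
        apply hbig
        have h1 : f n₀ ∈ hfin.toFinset := by
          simp [Set.Finite.mem_toFinset]; exact ⟨hmS, hmsuc⟩
        have h2 : f n₀ ≤ hfin.toFinset.sup id := Finset.le_sup (f := id) h1
        have : H' t = H' (res f n₀) := rfl
        calc f n₀ ≤ hfin.toFinset.sup id := h2
          _ < hfin.toFinset.sup id + 1 := Nat.lt_succ_self _
          _ ≤ H' t := by
              rw [hH']; simp only []
              refine le_max_of_le_left (le_max_of_le_right ?_)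
              rw [dif_pos hfin]
      have hnotE : f n₀ ∉ E t := by
        intro hmE
        apply hbig
        calc f n₀ ≤ (E t).sup id := Finset.le_sup (f := id) hmE
          _ < (E t).sup id + 1 := Nat.lt_succ_self _
          _ ≤ H' t := le_max_of_le_left (le_max_left _ _)
      have hGspec := hG t (f n₀) ⟨hpre, hmem, hsuc, hrich, hmS, hmsuc, hnotE⟩ f hf
        (by rw [List.length_append, hlen]; simpa using (res_succ f n₀).symm ▸ rfl)
      -- the set is contained in a finite union
      apply Set.Finite.subset (hGspec.union (Set.finite_Iic n₀))
      intro n hn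
      by_cases hle : n ≤ n₀
      · exact Or.inr hle
      · left
        push_neg at hle
        obtain ⟨hs1, hs2, hs3⟩ := hn
        refine ⟨hs1, hs2, ?_⟩
        intro hlt
        apply hs3
        have hkey : G t (f n₀) (res f n) ≤ H' (res f n) := by
          have h1 : (res f n).take n₀ = res f n₀ := res_take f (le_of_lt hle)
          have h2 : (res f n).getD n₀ 0 = f n₀ := res_getD hle 0
          have h3 : n₀ ∈ Finset.range (res f n).length := by
            rw [res_length]; exact Finset.mem_range.mpr hle
          have h4 := Finset.le_sup (f := fun k => G ((res f n).take k) ((res f n).getD k 0) (res f n)) h3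
          simp only [h1, h2] at h4
          exact le_max_of_le_right h4
        omega

lemma not_bad_spec {p : Set (List ℕ)} {S : Set ℕ} {s : List ℕ} (hs : ¬ Bad p S s) :
    ∃ t, s <+: t ∧ t ∈ p ∧ (sucT p t).Infinite ∧
      {m | m ∈ S ∧ m ∈ sucT p t ∧ ¬ Bad p S (t ++ [m])}.Infinite := by
  classical
  by_contra hcon
  push_neg at hcon
  apply hs
  refine Bad.intro s (fun t => if h : {m | m ∈ S ∧ m ∈ sucT p t ∧ ¬ Bad p S (t ++ [m])}.Finite
    then h.toFinset else ∅) ?_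
  intro t hpre hmem hsuc hrich m hmS hmsuc hnE
  by_contra hnb
  have hfin : {m | m ∈ S ∧ m ∈ sucT p t ∧ ¬ Bad p S (t ++ [m])}.Finite := by
    by_contra hinf
    exact hinf (hcon t hpre hmem hsuc)
  simp only [dif_pos hfin] at hnE
  exact hnE (hfin.mem_toFinset.mpr ⟨hmS, hmsuc, hnb⟩)

def Wpred (p : Set (List ℕ)) (S : Set ℕ) (s t : List ℕ) : Prop :=
  s <+: t ∧ t ∈ p ∧ (sucT p t).Infinite ∧
    {m | m ∈ S ∧ m ∈ sucT p t ∧ ¬ Bad p S (t ++ [m])}.Infinite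

open Classical in
noncomputable def W (p : Set (List ℕ)) (S : Set ℕ) (s : List ℕ) : List ℕ :=
  if h : ∃ t, Wpred p S s t then h.choose else []

lemma W_spec {p : Set (List ℕ)} {S : Set ℕ} {s : List ℕ} (hs : ¬ Bad p S s) :
    Wpred p S s (W p S s) := by
  have h : ∃ t, Wpred p S s t := not_bad_spec hs
  rw [W, dif_pos h]
  exact h.choose_spec

def Mset (p : Set (List ℕ)) (S : Set ℕ) (u : List ℕ) : Set ℕ :=
  {m | m ∈ S ∧ m ∈ sucT p (W p S u) ∧ ¬ Bad p S (W p S u ++ [m])}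

noncomputable def node (p : Set (List ℕ)) (S : Set ℕ) (l : List ℕ) : List ℕ :=
  l.foldl (fun u m => W p S u ++ [m]) []

lemma node_nil (p : Set (List ℕ)) (S : Set ℕ) : node p S [] = [] := rfl

lemma node_snoc (p : Set (List ℕ)) (S : Set ℕ) (l : List ℕ) (m : ℕ) :
    node p S (l ++ [m]) = W p S (node p S l) ++ [m] := by
  simp [node, List.foldl_append]

inductive Valid (p : Set (List ℕ)) (S : Set ℕ) : List ℕ → Prop
  | nil : Valid p S []
  | snoc (l : List ℕ) (m : ℕ) : Valid p S l → m ∈ Mset p S (node p S l) → Valid p S (l ++ [m])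

section CaseOne
variable {p : Set (List ℕ)} {S : Set ℕ}

lemma prefix_snoc_of_proper {l₁ l₂ : List ℕ} (h : l₁ <+: l₂) (hne : l₁ ≠ l₂) :
    ∃ m, l₁ ++ [m] <+: l₂ := by
  obtain ⟨w, rfl⟩ := h
  cases w with
  | nil => simp at hne
  | cons a w => exact ⟨a, by simp⟩

lemma diverge (l₁ : List ℕ) : ∀ l₂ : List ℕ, ¬ l₁ <+: l₂ → ¬ l₂ <+: l₁ →
    ∃ l m₁ m₂, m₁ ≠ m₂ ∧ l ++ [m₁] <+: l₁ ∧ l ++ [m₂] <+: l₂ := by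
  induction l₁ with
  | nil => intro l₂ h1 _; exact absurd (List.nil_prefix) h1
  | cons a t₁ ih =>
    intro l₂ h1 h2
    cases l₂ with
    | nil => exact absurd (List.nil_prefix) h2
    | cons b t₂ =>
      by_cases hab : a = b
      · subst hab
        have h1' : ¬ t₁ <+: t₂ := fun h => h1 (by simpa using h)
        have h2' : ¬ t₂ <+: t₁ := fun h => h2 (by simpa using h)
        obtain ⟨l, m₁, m₂, hne, p1, p2⟩ := ih t₂ h1' h2'
        exact ⟨a :: l, m₁, m₂, hne, by simpa using p1, by simpa using p2⟩
      · exact ⟨[], a, b, hab, by simp, by simp⟩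

lemma valid_notBad (h0 : ¬ Bad p S []) {l : List ℕ} (hl : Valid p S l) :
    ¬ Bad p S (node p S l) := by
  induction hl with
  | nil => simpa [node_nil] using h0
  | snoc l m hv hm ih =>
    rw [node_snoc]
    exact hm.2.2

lemma valid_prefix {l l' : List ℕ} (hl' : Valid p S l') (hpre : l <+: l') : Valid p S l := by
  induction hl' with
  | nil => rw [List.prefix_nil] at hpre; subst hpre; exact Valid.nil
  | snoc l' m hv hm ih =>
    rcases List.prefix_concat_iff.mp hpre with rfl | h
    · exact Valid.snoc l' m hv hm
    · exact ih h

lemma valid_snoc_mem {l : List ℕ} {m : ℕ} (h : Valid p S (l ++ [m])) :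
    m ∈ Mset p S (node p S l) := by
  generalize hL : l ++ [m] = L at h
  cases h with
  | nil => exact absurd hL (by simp)
  | snoc l' m' hv hm =>
    obtain ⟨h1, h2⟩ := List.append_inj' hL rfl
    subst h1
    injection h2 with h2 _
    subst h2
    exact hm

lemma node_prefix_W (h0 : ¬ Bad p S []) {l : List ℕ} (hl : Valid p S l) :
    node p S l <+: W p S (node p S l) :=
  (W_spec (valid_notBad h0 hl)).1

lemma node_mono (h0 : ¬ Bad p S []) {l l' : List ℕ} (hl' : Valid p S l') (hpre : l <+: l') :
    node p S l <+: node p S l' := by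
  induction hl' with
  | nil => rw [List.prefix_nil] at hpre; subst hpre; exact List.prefix_refl _
  | snoc l' m hv hm ih =>
    rcases List.prefix_concat_iff.mp hpre with rfl | h
    · exact List.prefix_refl _
    · calc node p S l <+: node p S l' := ih h
        _ <+: W p S (node p S l') := node_prefix_W h0 hv
        _ <+: W p S (node p S l') ++ [m] := List.prefix_append _ _
        _ = node p S (l' ++ [m]) := (node_snoc p S l' m).symm

lemma snoc_mono (h0 : ¬ Bad p S []) {l l' : List ℕ} {m : ℕ} (hl' : Valid p S l')
    (hpre : l ++ [m] <+: l') : W p S (node p S l) ++ [m] <+: node p S l' := by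
  induction hl' with
  | nil => rw [List.prefix_nil] at hpre; simp at hpre
  | snoc l' m' hv hm ih =>
    rcases List.prefix_concat_iff.mp hpre with heq | h
    · obtain ⟨h1, h2⟩ := List.append_inj' heq rfl
      subst h1; injection h2 with h2 _; subst h2
      rw [node_snoc]
    · calc W p S (node p S l) ++ [m] <+: node p S l' := ih h
        _ <+: node p S (l' ++ [m']) := node_mono h0 (Valid.snoc l' m' hv hm) (List.prefix_append _ _)

lemma W_mono (h0 : ¬ Bad p S []) {l l' : List ℕ} (hl : Valid p S l) (hl' : Valid p S l')
    (hpre : l <+: l') : W p S (node p S l) <+: W p S (node p S l') := by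
  by_cases heq : l = l'
  · subst heq; exact List.prefix_refl _
  · obtain ⟨m, hm⟩ := prefix_snoc_of_proper hpre heq
    calc W p S (node p S l) <+: W p S (node p S l) ++ [m] := List.prefix_append _ _
      _ <+: node p S l' := snoc_mono h0 hl' hm
      _ <+: W p S (node p S l') := node_prefix_W h0 hl'

lemma prefix_eq_of_length {u v A : List ℕ} (hu : u <+: A) (hv : v <+: A)
    (h : u.length = v.length) : u = v := by
  rw [List.prefix_iff_eq_take] at hu hv
  rw [hu, hv, h]

def qtree (p : Set (List ℕ)) (S : Set ℕ) : Set (List ℕ) :=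
  {v | ∃ l, Valid p S l ∧ v <+: W p S (node p S l)}

lemma pair_lemma (h0 : ¬ Bad p S []) {v : List ℕ} {k₁ k₂ : ℕ}
    (h1 : v ++ [k₁] ∈ qtree p S) (h2 : v ++ [k₂] ∈ qtree p S) (hne : k₁ ≠ k₂) :
    ∃ l, Valid p S l ∧ v = W p S (node p S l) ∧
      k₁ ∈ Mset p S (node p S l) ∧ k₂ ∈ Mset p S (node p S l) := by
  obtain ⟨l₁, hv₁, hp₁⟩ := h1
  obtain ⟨l₂, hv₂, hp₂⟩ := h2
  -- comparable case is impossible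
  have hcomp : ∀ (l l' : List ℕ) (k k' : ℕ), k ≠ k' → Valid p S l → Valid p S l' → l <+: l' →
      v ++ [k] <+: W p S (node p S l) → v ++ [k'] <+: W p S (node p S l') → False := by
    intro l l' k k' hkk hvl hvl' hll hk1 hk2
    have hW : W p S (node p S l) <+: W p S (node p S l') := W_mono h0 hvl hvl' hll
    have : v ++ [k] = v ++ [k'] :=
      prefix_eq_of_length (hk1.trans hW) hk2 (by simp)
    exact hkk (by simpa using this)
  by_cases hc1 : l₁ <+: l₂
  · exact absurd (hcomp l₁ l₂ k₁ k₂ hne hv₁ hv₂ hc1 hp₁ hp₂) (fun h => h)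
  by_cases hc2 : l₂ <+: l₁
  · exact absurd (hcomp l₂ l₁ k₂ k₁ hne.symm hv₂ hv₁ hc2 hp₂ hp₁) (fun h => h)
  obtain ⟨l, m₁, m₂, hmne, hq1, hq2⟩ := diverge l₁ l₂ hc1 hc2
  have hvl : Valid p S l := valid_prefix hv₁ ((List.prefix_append _ _).trans hq1)
  have hvm₁ : Valid p S (l ++ [m₁]) := valid_prefix hv₁ hq1
  have hvm₂ : Valid p S (l ++ [m₂]) := valid_prefix hv₂ hq2
  have hm₁ : m₁ ∈ Mset p S (node p S l) := valid_snoc_mem hvm₁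
  have hm₂ : m₂ ∈ Mset p S (node p S l) := valid_snoc_mem hvm₂
  set w := W p S (node p S l) with hw
  set A₁ := W p S (node p S l₁) with hA₁
  set A₂ := W p S (node p S l₂) with hA₂
  have hwm₁ : w ++ [m₁] <+: A₁ := (snoc_mono h0 hv₁ hq1).trans (node_prefix_W h0 hv₁)
  have hwm₂ : w ++ [m₂] <+: A₂ := (snoc_mono h0 hv₂ hq2).trans (node_prefix_W h0 hv₂)
  -- getD computations
  have e1 : A₁.getD v.length 0 = k₁ := getD_snoc_prefix hp₁ 0
  have e2 : A₂.getD v.length 0 = k₂ := getD_snoc_prefix hp₂ 0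
  have e3 : A₁.getD w.length 0 = m₁ := getD_snoc_prefix hwm₁ 0
  have e4 : A₂.getD w.length 0 = m₂ := getD_snoc_prefix hwm₂ 0
  have hvA₁ : v <+: A₁ := (List.prefix_append _ _).trans hp₁
  have hvA₂ : v <+: A₂ := (List.prefix_append _ _).trans hp₂
  have hwA₁ : w <+: A₁ := (List.prefix_append _ _).trans hwm₁
  have hwA₂ : w <+: A₂ := (List.prefix_append _ _).trans hwm₂
  rcases lt_trichotomy v.length w.length with hlt | heq | hgt
  · exfalso
    have u1 : A₁.getD v.length 0 = w.getD v.length 0 := getD_prefix hwA₁ hlt 0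
    have u2 : A₂.getD v.length 0 = w.getD v.length 0 := getD_prefix hwA₂ hlt 0
    exact hne (by rw [← e1, ← e2, u1, u2])
  · have hvw : v = w := prefix_eq_of_length hvA₁ hwA₁ heq
    refine ⟨l, hvl, hvw, ?_, ?_⟩
    · have : k₁ = m₁ := by rw [← e1, ← e3, heq]
      rwa [this]
    · have : k₂ = m₂ := by rw [← e2, ← e4, heq]
      rwa [this]
  · exfalso
    have u1 : A₁.getD w.length 0 = v.getD w.length 0 := getD_prefix hvA₁ hgt 0
    have u2 : A₂.getD w.length 0 = v.getD w.length 0 := getD_prefix hvA₂ hgt 0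
    exact hmne (by rw [← e3, ← e4, u1, u2])

end CaseOne

lemma eq_of_res_eq_getD {f : ℕ → ℕ} {n : ℕ} {A : List ℕ} (hlen : A.length = n)
    (h : ∀ i, i < n → A.getD i 0 = f i) : A = res f n := by
  apply List.ext_getElem (by simp [res_length, hlen])
  intro i h1 h2
  have : A.getD i 0 = (res f n).getD i 0 := by
    rw [h i (by omega), res_getD (by omega)]
  simpa [List.getD, List.getElem?_eq_getElem, h1, h2] using this

lemma take_succ_getD {A : List ℕ} {j : ℕ} (h : j < A.length) :
    A.take (j+1) = A.take j ++ [A.getD j 0] := by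
  rw [List.take_succ, List.getElem?_eq_getElem h]
  simp [List.getD, List.getElem?_eq_getElem h]

section CaseOneTree
variable {p : Set (List ℕ)} {S : Set ℕ} (hp : IsMiller p) (h0 : ¬ Bad p S [])

include hp h0 in
lemma qtree_subset : qtree p S ⊆ p := by
  rintro v ⟨l, hv, hpre⟩
  exact hp.2.1 _ ((W_spec (valid_notBad h0 hv)).2.1) v hpre

include h0 in
lemma W_node_mem_qtree {l : List ℕ} (hv : Valid p S l) : W p S (node p S l) ∈ qtree p S :=
  ⟨l, hv, List.prefix_refl _⟩

include h0 in
lemma Mset_subset_suc {l : List ℕ} (hv : Valid p S l) :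
    Mset p S (node p S l) ⊆ sucT (qtree p S) (W p S (node p S l)) := by
  intro m hm
  have hv' : Valid p S (l ++ [m]) := Valid.snoc l m hv hm
  refine ⟨l ++ [m], hv', ?_⟩
  rw [← node_snoc]
  exact node_prefix_W h0 hv'

include h0 in
lemma Mset_infinite {l : List ℕ} (hv : Valid p S l) : (Mset p S (node p S l)).Infinite :=
  (W_spec (valid_notBad h0 hv)).2.2.2

include h0 in
lemma W_node_split {l : List ℕ} (hv : Valid p S l) :
    W p S (node p S l) ∈ SplitNodes (qtree p S) :=
  ⟨W_node_mem_qtree h0 hv, (Mset_infinite h0 hv).mono (Mset_subset_suc h0 hv)⟩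

include hp h0 in
lemma qtree_miller : IsMiller (qtree p S) := by
  refine ⟨⟨[], [], Valid.nil, List.nil_prefix⟩, ?_, ?_, ?_⟩
  · rintro s ⟨l, hv, hpre⟩ t ht
    exact ⟨l, hv, ht.trans hpre⟩
  · intro s hs
    exact hp.2.2.1 s (qtree_subset hp h0 hs)
  · rintro s ⟨l, hv, hpre⟩
    exact ⟨W p S (node p S l), W_node_mem_qtree h0 hv, hpre, (W_node_split h0 hv).2⟩

include h0 in
lemma suc_mem_S {v : List ℕ} {k : ℕ} (hk : k ∈ sucT (qtree p S) v)
    (hinf : (sucT (qtree p S) v).Infinite) : k ∈ S := by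
  obtain ⟨k', hk'mem, hne⟩ := (hinf.diff (Set.finite_singleton k)).nonempty
  obtain ⟨l, hv, -, hmem, -⟩ := pair_lemma h0 hk hk'mem (fun h => hne (h ▸ rfl))
  exact hmem.1

include h0 in
lemma branch_splits {f : ℕ → ℕ} (hf : IsBranch (qtree p S) f) (n : ℕ) :
    ∃ j, n ≤ j ∧ res f j ∈ SplitNodes (qtree p S) := by
  classical
  obtain ⟨l, hv, hpre⟩ := hf n
  set A := W p S (node p S l) with hA
  have hnL : n ≤ A.length := by
    have := hpre.length_le; rwa [res_length] at this
  by_cases hend : ∃ i, i < A.length ∧ f i ≠ A.getD i 0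
  · -- divergence before the end of A
    obtain ⟨j, ⟨hjL, hjne⟩, hjmin⟩ :
        ∃ j, (j < A.length ∧ f j ≠ A.getD j 0) ∧ ∀ i, i < j → ¬ (i < A.length ∧ f i ≠ A.getD i 0) :=
      ⟨Nat.find hend, Nat.find_spec hend, fun i hi => Nat.find_min hend hi⟩
    have hmin : ∀ i, i < j → f i = A.getD i 0 := by
      intro i hi
      have := hjmin i hi
      push_neg at this
      exact this (by omega)
    have hjn : n ≤ j := by
      by_contra hlt
      push_neg at hlt
      apply hjne
      have h1 : (res f n).getD j 0 = f j := res_getD hlt 0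
      rw [← h1, getD_prefix hpre (by rw [res_length]; exact hlt) 0]
    have hvtake : A.take j = res f j := by
      apply eq_of_res_eq_getD (by rw [List.length_take]; omega)
      intro i hi
      rw [← getD_prefix (List.take_prefix j A) (by rw [List.length_take]; omega) 0]
      exact (hmin i hi).symm
    have hs₁ : res f j ++ [f j] ∈ qtree p S := by
      rw [← res_succ]; exact hf (j+1)
    have hs₂ : res f j ++ [A.getD j 0] ∈ qtree p S := by
      rw [← hvtake, ← take_succ_getD hjL]
      exact ⟨l, hv, List.take_prefix _ _⟩
    obtain ⟨l', hv', heq, -, -⟩ := pair_lemma h0 hs₁ hs₂ hjne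
    refine ⟨j, hjn, ?_⟩
    rw [heq]
    exact W_node_split h0 hv'
  · -- the branch runs through all of A
    push_neg at hend
    have hAe : A = res f A.length := eq_of_res_eq_getD rfl (fun i hi => (hend i hi).symm)
    refine ⟨A.length, hnL, ?_⟩
    rw [← hAe]
    exact W_node_split h0 hv

end CaseOneTree


lemma branch_strictMono {p : Set (List ℕ)} (hp : IsMiller p) {f : ℕ → ℕ}
    (hf : IsBranch p f) : StrictMono f := by
  apply strictMono_nat_of_lt_succ
  intro n
  have hc := hp.2.2.1 _ (hf (n+2))
  simp only [List.Chain', List.isChain_iff_getElem] at hc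
  have h := hc n (by rw [res_length]; omega)
  have e1 : (res f (n+2)).get ⟨n, by rw [res_length]; omega⟩ = f n := by
    simp [res]
  have e2 : (res f (n+2)).get ⟨n+1, by rw [res_length]; omega⟩ = f (n+1) := by
    simp [res]
  simp only [List.get_eq_getElem] at e1 e2
  rwa [e1, e2] at h

lemma unbounded_infinite {B : Set ℕ} (h : ∀ N, ∃ n, N ≤ n ∧ n ∈ B) : B.Infinite := by
  rw [Set.infinite_coe_iff.symm, Set.infinite_coe_iff]
  apply Set.infinite_of_not_bddAbove
  rintro ⟨b, hb⟩
  obtain ⟨n, hn1, hn2⟩ := h (b+1)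
  have := hb hn2
  omega

lemma exists_branch_through {q : Set (List ℕ)} (hq : IsMiller q) (H : List ℕ → ℕ) :
    ∃ f, IsBranch q f ∧ ∀ N, ∃ n, N ≤ n ∧ res f n ∈ SplitNodes q ∧ H (res f n) ≤ f n := by
  classical
  obtain ⟨s₀, hs₀⟩ := hq.1
  have hnil : [] ∈ q := hq.2.1 s₀ hs₀ [] (List.nil_prefix)
  have hstep : ∀ s, s ∈ q → ∃ u, u ∈ q ∧ ∃ t, s <+: t ∧ t ∈ q ∧ (sucT q t).Infinite ∧
      ∃ m, u = t ++ [m] ∧ H t ≤ m := by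
    intro s hs
    obtain ⟨t, ht, hst, hinf⟩ := hq.2.2.2 s hs
    obtain ⟨m, hm, hHm⟩ := hinf.exists_gt (H t)
    exact ⟨t ++ [m], hm, t, hst, ht, hinf, m, rfl, le_of_lt hHm⟩
  let g : ℕ → {s // s ∈ q} := fun k => Nat.rec ⟨[], hnil⟩
    (fun _ sk => ⟨(hstep sk.1 sk.2).choose, ((hstep sk.1 sk.2).choose_spec).1⟩) k
  have hg : ∀ k, ∃ t, (g k).1 <+: t ∧ t ∈ q ∧ (sucT q t).Infinite ∧
      ∃ m, (g (k+1)).1 = t ++ [m] ∧ H t ≤ m :=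
    fun k => ((hstep (g k).1 (g k).2).choose_spec).2
  have hmono : ∀ k, (g k).1 <+: (g (k+1)).1 ∧ (g k).1.length < (g (k+1)).1.length := by
    intro k
    obtain ⟨t, h1, -, -, m, h2, -⟩ := hg k
    constructor
    · rw [h2]; exact h1.trans (List.prefix_append _ _)
    · rw [h2, List.length_append]
      have := h1.length_le; simp; omega
  have hchain : ∀ k j, k ≤ j → (g k).1 <+: (g j).1 := by
    intro k j hkj
    induction j with
    | zero => rw [Nat.le_zero.mp hkj]
    | succ j ih =>
      rcases Nat.lt_succ_iff_lt_or_eq.mp (Nat.lt_succ_of_le hkj) with h | h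
      · exact (ih (by omega)).trans (hmono j).1
      · rw [h]
  have hlen : ∀ k, k ≤ (g k).1.length := by
    intro k
    induction k with
    | zero => omega
    | succ k ih => have := (hmono k).2; omega
  set f : ℕ → ℕ := fun n => (g (n+1)).1.getD n 0 with hfdef
  have hcomp : ∀ j j' i, i < (g j).1.length → i < (g j').1.length →
      (g j).1.getD i 0 = (g j').1.getD i 0 := by
    intro j j' i hi hi'
    rcases le_total j j' with h | h
    · exact (getD_prefix (hchain j j' h) hi 0).symm
    · exact getD_prefix (hchain j' j h) hi' 0
  have htake : ∀ j n, n ≤ (g j).1.length → (g j).1.take n = res f n := by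
    intro j n
    induction n with
    | zero => intro _; simp [res]
    | succ n ih =>
      intro hn
      rw [take_succ_getD (by omega), ih (by omega), res_succ]
      congr 1
      have : (g j).1.getD n 0 = f n := by
        apply hcomp j (n+1) n (by omega)
        have := hlen (n+1); omega
      rw [this]
  have hbr : IsBranch q f := by
    intro n
    have h1 : res f n = (g n).1.take n := (htake n n (hlen n)).symm
    rw [h1]
    exact hq.2.1 _ (g n).2 _ (List.take_prefix _ _)
  refine ⟨f, hbr, ?_⟩
  intro N
  obtain ⟨t, h1, h2, h3, m, h4, h5⟩ := hg N
  refine ⟨t.length, le_trans (hlen N) h1.length_le, ?_, ?_⟩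
  · have ht : res f t.length = t := by
      rw [← htake (N+1) t.length (by rw [h4, List.length_append]; simp), h4]
      simp
    rw [ht]; exact ⟨h2, h3⟩
  · have hft : f t.length = m := by
      have h6 : t.length < (g (t.length + 1)).1.length := by have := hlen (t.length + 1); omega
      have h7 : t.length < (g (N+1)).1.length := by rw [h4, List.length_append]; simp
      have := hcomp (t.length + 1) (N+1) t.length h6 h7
      rw [hfdef]
      simp only []
      rw [this, h4, getD_snoc]
    have ht : res f t.length = t := by
      rw [← htake (N+1) t.length (by rw [h4, List.length_append]; simp), h4]
      simp
    rw [ht, hft]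
    exact h5

lemma splitNodes_mono {q p : Set (List ℕ)} (hqp : q ⊆ p) :
    SplitNodes q ⊆ SplitNodes p := by
  rintro s ⟨h1, h2⟩
  exact ⟨hqp h1, h2.mono (fun m hm => hqp hm)⟩

lemma not_both {p : Set (List ℕ)} (hp : IsMiller p) {S : Set ℕ}
    (h1 : ∃ q, IsMiller q ∧ q ⊆ p ∧ ∀ X ∈ splitSets q, X.Infinite ∧ X ⊆ S)
    (h2 : ∃ H : List ℕ → ℕ, ∀ f, IsBranch p f →
      {n | res f n ∈ SplitNodes p ∧ f n ∈ S ∧ ¬ f n < H (res f n)}.Finite) : False := by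
  obtain ⟨q, hq, hqp, hsplit⟩ := h1
  obtain ⟨H, hH⟩ := h2
  obtain ⟨f, hbr, hthru⟩ := exists_branch_through hq H
  have hbrp : IsBranch p f := fun n => hqp (hbr n)
  have hsub : Sp q f ⊆ S := (hsplit (Sp q f) ⟨f, hbr, rfl⟩).2
  have hinf : {n | res f n ∈ SplitNodes p ∧ f n ∈ S ∧ ¬ f n < H (res f n)}.Infinite := by
    apply unbounded_infinite
    intro N
    obtain ⟨n, hn1, hn2, hn3⟩ := hthru N
    exact ⟨n, hn1, splitNodes_mono hqp hn2, hsub ⟨n, hn2, rfl⟩, by omega⟩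
  exact hinf (hH f hbrp)

/-- Dichotomy: for every Miller tree `p` and infinite `S ⊆ ω`, exactly one of:
(1) some Miller subtree `q ≤ p` has `[q]_split ⊆ [S]^ω`; (2) there is
`H : Split(p) → ω` such that along every branch the values in `S` at splitting
positions are almost all below `H`. -/
theorem stmt9 (p : Set (List ℕ)) (hp : IsMiller p) (S : Set ℕ) (hS : S.Infinite) :
    Xor'
      (∃ q, IsMiller q ∧ q ⊆ p ∧ ∀ X ∈ splitSets q, X.Infinite ∧ X ⊆ S)
      (∃ H : List ℕ → ℕ, ∀ f, IsBranch p f →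
        {n | res f n ∈ SplitNodes p ∧ f n ∈ S ∧ ¬ f n < H (res f n)}.Finite) := by
  by_cases h0 : Bad p S []
  · right
    constructor
    · obtain ⟨H, hH⟩ := bad_main p S [] h0
      exact ⟨H, fun f hf => hH f hf rfl⟩
    · intro h1
      obtain ⟨H, hH⟩ := bad_main p S [] h0
      exact not_both hp h1 ⟨H, fun f hf => hH f hf rfl⟩
  · left
    have hq := qtree_miller hp h0
    have hqp := qtree_subset hp h0
    refine ⟨⟨qtree p S, hq, hqp, ?_⟩, fun h2 => not_both hp ⟨qtree p S, hq, hqp, ?_⟩ h2⟩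
    all_goals {
      rintro X ⟨f, hbr, rfl⟩
      have hmono : StrictMono f := branch_strictMono hq hbr
      have hXim : Sp (qtree p S) f = f '' {n | res f n ∈ SplitNodes (qtree p S)} := by
        ext m
        constructor
        · rintro ⟨n, hn, rfl⟩; exact ⟨n, hn, rfl⟩
        · rintro ⟨n, hn, rfl⟩; exact ⟨n, hn, rfl⟩
      constructor
      · rw [hXim]
        apply Set.Infinite.image (Set.injOn_of_injective hmono.injective)
        apply unbounded_infinite
        intro N
        obtain ⟨j, hj1, hj2⟩ := branch_splits h0 hbr N
        exact ⟨j, hj1, hj2⟩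
      · rintro m ⟨n, hn, rfl⟩
        have hsucm : f n ∈ sucT (qtree p S) (res f n) := by
          have := hbr (n+1); rwa [res_succ] at this
        exact suc_mem_S h0 hsucm hn.2
    }
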